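/- Let n ≥ 3 and let G be the dihedral group of order 2^n (with presentation ⟨a, b : a^{2^{n-1}} = b² = e, bab = a^{-1}⟩). Then Γ*(G) has a universal vertex; that is, there exists a non-isolated vertex H of Γ(G) that is adjacent in Γ(G) to every other non-isolated vertex. -/

import Mathlib

open scoped Pointwise

/-- Adjacency in the co-maximal subgroup graph `Γ(G)`: `H` and `K` are distinct
non-trivial proper subgroups of `G` with `HK = G` as a setwise product. -/
def comaxAdj {G : Type*} [Group G] (H K : Subgroup G) : Prop :=
  H ≠ ⊥ ∧ H ≠ ⊤ ∧ K ≠ ⊥ ∧ K ≠ ⊤ ∧ H ≠ K ∧ (H : Set G) * (K : Set G) = Set.univ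

open DihedralGroup Subgroup

/-- The rotation subgroup of a dihedral group. -/
def rotations (m : ℕ) : Subgroup (DihedralGroup m) where
  carrier := {g | ∃ i, g = r i}
  one_mem' := ⟨0, one_def⟩
  mul_mem' := by rintro _ _ ⟨i, rfl⟩ ⟨j, rfl⟩; exact ⟨i + j, r_mul_r i j⟩
  inv_mem' := by rintro _ ⟨i, rfl⟩; exact ⟨-i, rfl⟩

lemma mem_rotations {m : ℕ} (g : DihedralGroup m) : g ∈ rotations m ↔ ∃ i, g = r i := Iff.rfl

lemma r_mem_zpowers_r {m : ℕ} [NeZero m] {u : ZMod m} (hu : IsUnit u) (t : ZMod m) :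
    r t ∈ Subgroup.zpowers (r u) := by
  obtain ⟨v, hv⟩ : ∃ v, u * v = 1 := ⟨↑hu.unit⁻¹, hu.mul_val_inv⟩
  refine ⟨((t * v).val : ℤ), ?_⟩
  show r u ^ (((t * v).val : ℕ) : ℤ) = r t
  rw [zpow_natCast]
  conv_lhs => rw [← ZMod.natCast_zmod_val u, ← r_one_pow, ← pow_mul, r_one_pow]
  congr 1
  push_cast
  rw [ZMod.natCast_zmod_val, ZMod.natCast_zmod_val, mul_comm t v, ← mul_assoc, hv, one_mul]

/-- For `n ≥ 3`, the deleted co-maximal subgroup graph of the dihedral group of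
order `2^n` has a universal vertex. -/
theorem dihedral_deleted_comaximal_universal (n : ℕ) (hn : 3 ≤ n) :
    ∃ H : Subgroup (DihedralGroup (2 ^ (n - 1))),
      (∃ L, comaxAdj H L) ∧
      ∀ K : Subgroup (DihedralGroup (2 ^ (n - 1))),
        (∃ L, comaxAdj K L) → K ≠ H → comaxAdj H K := by
  set m := 2 ^ (n - 1) with hm
  haveI : NeZero m := ⟨by positivity⟩
  have hm4 : 4 ≤ m := by
    calc (4:ℕ) = 2 ^ 2 := rfl
    _ ≤ 2 ^ (n - 1) := Nat.pow_le_pow_right (by norm_num) (by omega)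
  haveI : Fact (1 < m) := ⟨by omega⟩
  have h2 : (2:ℕ) ∣ m := dvd_pow_self 2 (by omega)
  set ψ : ZMod m →+* ZMod 2 := ZMod.castHom h2 (ZMod 2) with hψdef
  -- elements with odd image are units
  have hunit : ∀ u : ZMod m, ψ u ≠ 0 → IsUnit u := by
    intro u hu
    have hval : ψ u = ((u.val : ℕ) : ZMod 2) := by
      rw [hψdef, ZMod.castHom_apply, ← ZMod.natCast_val]
    have hodd : ¬ (2 ∣ u.val) := by
      intro hdvd
      exact hu (by rw [hval, (ZMod.natCast_eq_zero_iff _ _).mpr hdvd])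
    have hcop : Nat.Coprime u.val m :=
      (Nat.coprime_comm.mp ((Nat.Prime.coprime_iff_not_dvd Nat.prime_two).mpr hodd)).pow_right _
    have := (ZMod.isUnit_iff_coprime u.val m).mpr hcop
    rwa [ZMod.natCast_zmod_val] at this
  -- basic facts about the rotation subgroup
  have hRbot : rotations m ≠ ⊥ := by
    intro h
    have h1 : (r 1 : DihedralGroup m) ∈ rotations m := ⟨1, rfl⟩
    rw [h, Subgroup.mem_bot, one_def] at h1
    have : (1 : ZMod m) = 0 := by injection h1
    exact one_ne_zero this
  have hRtop : rotations m ≠ ⊤ := by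
    intro h
    have : (sr 0 : DihedralGroup m) ∈ rotations m := h ▸ Subgroup.mem_top _
    obtain ⟨i, hi⟩ := this
    exact absurd hi (by simp)
  -- adjacency with any proper nontrivial subgroup containing a reflection
  have adj_rot : ∀ (K : Subgroup (DihedralGroup m)), K ≠ ⊥ → K ≠ ⊤ →
      rotations m ≠ K → ∀ j : ZMod m, sr j ∈ K → comaxAdj (rotations m) K := by
    intro K hKbot hKtop hne j hj
    refine ⟨hRbot, hRtop, hKbot, hKtop, hne, ?_⟩
    rw [Set.eq_univ_iff_forall]
    rintro (i | i)
    · exact Set.mem_mul.mpr ⟨r i, ⟨i, rfl⟩, 1, K.one_mem, mul_one _⟩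
    · refine Set.mem_mul.mpr ⟨r (j - i), ⟨_, rfl⟩, sr j, hj, ?_⟩
      rw [r_mul_sr]; congr 1; ring
  refine ⟨rotations m, ?_, ?_⟩
  · -- rotations is not isolated: adjacent to ⟨sr 0⟩
    refine ⟨Subgroup.zpowers (sr 0), adj_rot _ ?_ ?_ ?_ 0 (Subgroup.mem_zpowers _)⟩
    · rw [ne_eq, Subgroup.zpowers_eq_bot]
      intro h; rw [one_def] at h; exact absurd h (by intro h'; cases h')
    · -- r 1 is not a power of sr 0
      intro h
      have : (r 1 : DihedralGroup m) ∈ Subgroup.zpowers (sr 0) := h ▸ Subgroup.mem_top _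
      obtain ⟨k, hk⟩ := this
      have hk : (sr 0 : DihedralGroup m) ^ k = r 1 := hk
      have hsq : (sr 0 : DihedralGroup m) ^ (2:ℤ) = 1 := by
        have : (sr 0 : DihedralGroup m) ^ (2:ℕ) = 1 := by
          rw [pow_two, sr_mul_self]
        exact_mod_cast this
      rcases Int.even_or_odd k with ⟨c, rfl⟩ | ⟨c, rfl⟩
      · rw [← two_mul, zpow_mul, hsq, one_zpow] at hk
        rw [one_def] at hk
        have : (0 : ZMod m) = 1 := by injection hk
        exact one_ne_zero this.symm
      · rw [zpow_add, zpow_mul, hsq, one_zpow, one_mul, zpow_one] at hk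
        exact absurd hk (by simp)
    · intro h
      have : (sr 0 : DihedralGroup m) ∈ rotations m := h ▸ Subgroup.mem_zpowers _
      obtain ⟨i, hi⟩ := this
      exact absurd hi (by simp)
  · -- universality
    intro K ⟨L, hL⟩ hKH
    obtain ⟨hKbot, hKtop, hLbot, hLtop, hKL, hprod⟩ := hL
    by_cases hsr : ∃ j, sr j ∈ K
    · obtain ⟨j, hj⟩ := hsr
      exact adj_rot K hKbot hKtop (Ne.symm hKH) j hj
    · push_neg at hsr
      exfalso
      -- every element of K is an "even" rotation
      have hKrot : ∀ g ∈ K, ∃ i : ZMod m, g = r i ∧ ψ i = 0 := by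
        intro g hg
        cases g with
        | sr j => exact absurd hg (hsr j)
        | r i =>
          refine ⟨i, rfl, ?_⟩
          by_contra hne0
          apply hKH
          apply le_antisymm
          · rintro (t | t) ht
            · exact ⟨t, rfl⟩
            · exact absurd ht (hsr t)
          · rintro _ ⟨t, rfl⟩
            exact (Subgroup.zpowers_le.mpr hg) (r_mem_zpowers_r (hunit i hne0) t)
      -- decompose sr 0 and sr 1 along K * L
      have h0 : (sr 0 : DihedralGroup m) ∈ (↑K * ↑L : Set (DihedralGroup m)) := by
        rw [hprod]; trivial
      have h1 : (sr 1 : DihedralGroup m) ∈ (↑K * ↑L : Set (DihedralGroup m)) := by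
        rw [hprod]; trivial
      obtain ⟨k1, hk1, l1, hl1, he1⟩ := Set.mem_mul.mp h0
      obtain ⟨k2, hk2, l2, hl2, he2⟩ := Set.mem_mul.mp h1
      obtain ⟨i, rfl, hi0⟩ := hKrot _ hk1
      obtain ⟨j, rfl, hj0⟩ := hKrot _ hk2
      have hl1' : l1 = sr i := by
        have : l1 = (r i)⁻¹ * sr 0 := by rw [← he1]; group
        rw [this]
        show r (-i) * sr 0 = sr i
        rw [r_mul_sr]; congr 1; ring
      have hl2' : l2 = sr (1 + j) := by
        have : l2 = (r j)⁻¹ * sr 1 := by rw [← he2]; group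
        rw [this]
        show r (-j) * sr 1 = sr (1 + j)
        rw [r_mul_sr]; congr 1; ring
      rw [hl1'] at hl1
      rw [hl2'] at hl2
      have hmem : r (1 + j - i) ∈ L := by
        have := L.mul_mem hl1 hl2
        rwa [sr_mul_sr] at this
      have hψodd : ψ (1 + j - i) ≠ 0 := by
        rw [map_sub, map_add, map_one, hi0, hj0]
        simp
      have hrot_le : ∀ t : ZMod m, r t ∈ L := fun t =>
        (Subgroup.zpowers_le.mpr hmem) (r_mem_zpowers_r (hunit _ hψodd) t)
      apply hLtop
      rw [Subgroup.eq_top_iff']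
      rintro (t | t)
      · exact hrot_le t
      · have : sr i * r (t - i) = sr t := by rw [sr_mul_r]; congr 1; ring
        exact this ▸ L.mul_mem hl1 (hrot_le _)
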